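/- Fix N ≥ 1. Let A_{ij} : P → ℝ and B_{jα} : Q → ℝ be smooth functions on convex open sets P, Q ⊆ ℝ^N (coordinates u and v respectively), with the matrices (A_{ij}(u)) and (B_{jα}(v)) invertible at every point, and suppose e_{iα}(u,v) = Σ_j A_{ij}(u)·B_{jα}(v) satisfies the equations (E1) ∂e_{jα}/∂uᵢ = ∂e_{iα}/∂u_j for all i,j,α, and (E2) Σ_α (e_{iα} · ∂e_{jβ}/∂v_α − e_{jα} · ∂e_{iβ}/∂v_α) = 0 for all i,j,β. Then: (1) there exist smooth functions θ¹₁, …, θ¹_N : P → ℝ with A_{ij} = ∂θ¹_j/∂uᵢ on P, and θ¹ = (θ¹₁,…,θ¹_N) is a local diffeomorphism at every point of P; (2) for every point q ∈ Q there exist an open neighborhood Q' ⊆ Q of q and a smooth map θ² : Q' → ℝ^N which is a diffeomorphism onto its (open) image such that Σ_α B_{jα}(v) · ∂θ²_β/∂v_α (v) = δ_{jβ} for all v ∈ Q' and all j, β (i.e., (B_{jα}) is the inverse Jacobian matrix of θ²). -/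

import Mathlib

/-- Partial derivative `∂f/∂ξᵢ` of a function of one vector variable. -/
noncomputable def pderiv' {N : ℕ} (i : Fin N) (f : (Fin N → ℝ) → ℝ) (p : Fin N → ℝ) : ℝ :=
  fderiv ℝ f p (fun l => if l = i then 1 else 0)

/-- Partial derivative `∂f/∂uᵢ` in the first factor of `ℝ^N × ℝ^N`. -/
noncomputable def dU2 {N : ℕ} (i : Fin N)
    (f : (Fin N → ℝ) × (Fin N → ℝ) → ℝ) (p : (Fin N → ℝ) × (Fin N → ℝ)) : ℝ :=
  fderiv ℝ f p ((fun l => if l = i then 1 else 0), 0)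

/-- Partial derivative `∂f/∂v_α` in the second factor of `ℝ^N × ℝ^N`. -/
noncomputable def dV2 {N : ℕ} (α : Fin N)
    (f : (Fin N → ℝ) × (Fin N → ℝ) → ℝ) (p : (Fin N → ℝ) × (Fin N → ℝ)) : ℝ :=
  fderiv ℝ f p (0, (fun l => if l = α then 1 else 0))

/-- The reducible matrix `e_{iα}(u,v) = Σⱼ A_{ij}(u) B_{jα}(v)`. -/
noncomputable def eRed {N : ℕ} (A B : Fin N → Fin N → (Fin N → ℝ) → ℝ)
    (i α : Fin N) (p : (Fin N → ℝ) × (Fin N → ℝ)) : ℝ :=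
  ∑ j, A i j p.1 * B j α p.2


noncomputable section
set_option maxHeartbeats 2000000

open Set Matrix MeasureTheory intervalIntegral ContinuousLinearMap
open scoped Interval

namespace Stmt12

variable {N : ℕ}
local notation "E" => (Fin N → ℝ)

/-! ### Basis vectors and coefficient forms -/

/-- basis vector -/
def bv (i : Fin N) : Fin N → ℝ := fun l => if l = i then 1 else 0

lemma pderiv'_eq (i : Fin N) (f : E → ℝ) (p : E) : pderiv' i f p = fderiv ℝ f p (bv i) := rfl

lemma pi_decomp (x : E) : x = ∑ i, x i • bv i := by
  ext l; simp [bv]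

/-- the 1-form with coefficients `a`: `h ↦ ∑ i, a i * h i`. -/
def coeffForm (a : Fin N → ℝ) : E →L[ℝ] ℝ := ∑ i, a i • ContinuousLinearMap.proj i

lemma coeffForm_apply (a : Fin N → ℝ) (h : E) : coeffForm a h = ∑ i, a i * h i := by
  simp [coeffForm]

lemma coeffForm_bv (a : Fin N → ℝ) (k : Fin N) : coeffForm a (bv k) = a k := by
  simp [coeffForm_apply, bv]

/-- a CLM on `E` applied to `x` expands over the basis. -/
lemma clm_expand {F : Type*} [NormedAddCommGroup F] [NormedSpace ℝ F]
    (L : E →L[ℝ] F) (x : E) : L x = ∑ k, x k • L (bv k) := by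
  conv_lhs => rw [pi_decomp x]
  rw [map_sum]
  simp

/-- derivative of a function `u ↦ coeffForm (a u)` -/
lemma hasFDerivAt_coeffForm {P : Set E} (hP : IsOpen P)
    (a : Fin N → E → ℝ) (ha : ∀ i, ContDiffOn ℝ (⊤:ℕ∞) (a i) P)
    {u : E} (hu : u ∈ P) :
    HasFDerivAt (fun w => coeffForm (fun i => a i w))
      (∑ i, (fderiv ℝ (a i) u).smulRight (ContinuousLinearMap.proj i)) u := by
  have : ∀ i : Fin N, HasFDerivAt (fun w => a i w • (ContinuousLinearMap.proj
      (R := ℝ) (φ := fun _ : Fin N => ℝ) i))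
      ((fderiv ℝ (a i) u).smulRight (ContinuousLinearMap.proj i)) u := by
    intro i
    exact (((ha i).contDiffAt (hP.mem_nhds hu)).differentiableAt
      (by simp)).hasFDerivAt.smul_const
        (ContinuousLinearMap.proj (R := ℝ) (φ := fun _ : Fin N => ℝ) i)
  have hsum := HasFDerivAt.fun_sum (fun i (_ : i ∈ Finset.univ) => this i)
  exact hsum

/-- symmetry of the derivative of a coefficient 1-form, from symmetry of partials. -/
lemma coeffForm_symm {P : Set E} (hP : IsOpen P)
    (a : Fin N → E → ℝ) (ha : ∀ i, ContDiffOn ℝ (⊤:ℕ∞) (a i) P)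
    (hsympd : ∀ k i, ∀ u ∈ P, pderiv' k (a i) u = pderiv' i (a k) u) :
    ∀ u ∈ P, ∀ x y, fderiv ℝ (fun w => coeffForm (fun i => a i w)) u x y
      = fderiv ℝ (fun w => coeffForm (fun i => a i w)) u y x := by
  intro u hu x y
  rw [(hasFDerivAt_coeffForm hP a ha hu).fderiv]
  have expand : ∀ x y : E,
      (∑ i, (fderiv ℝ (a i) u).smulRight (ContinuousLinearMap.proj
        (R := ℝ) (φ := fun _ : Fin N => ℝ) i)) x y
        = ∑ i, ∑ k, x k * pderiv' k (a i) u * y i := by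
    intro x y
    rw [ContinuousLinearMap.sum_apply]
    rw [ContinuousLinearMap.sum_apply]
    refine Finset.sum_congr rfl fun i _ => ?_
    rw [ContinuousLinearMap.smulRight_apply]
    have : fderiv ℝ (a i) u x = ∑ k, x k * pderiv' k (a i) u := by
      rw [clm_expand (fderiv ℝ (a i) u) x]
      simp [pderiv'_eq, smul_eq_mul]
    simp only [this, ContinuousLinearMap.smul_apply, ContinuousLinearMap.proj_apply,
      smul_eq_mul, Finset.sum_mul]
  rw [expand, expand]
  rw [Finset.sum_comm]
  refine Finset.sum_congr rfl fun i _ => Finset.sum_congr rfl fun k _ => ?_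
  rw [hsympd k i u hu]
  ring

/-- `∑ l, a l * bv i l = a i` -/
lemma sum_mul_bv (a : Fin N → ℝ) (i : Fin N) : ∑ l, a l * bv i l = a i := by
  simp [bv]

/-! ### Poincaré lemma on a convex open set -/

theorem poincare {P : Set E} (hP : IsOpen P) (hconv : Convex ℝ P)
    {u₀ : E} (hu₀ : u₀ ∈ P) (ω : E → (E →L[ℝ] ℝ))
    (hω : ContDiffOn ℝ (⊤:ℕ∞) ω P)
    (hsym : ∀ u ∈ P, ∀ x y, fderiv ℝ ω u x y = fderiv ℝ ω u y x) :
    ∃ θ : E → ℝ, ∀ u ∈ P, HasFDerivAt θ (ω u) u := by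
  classical
  set c : E → ℝ → E := fun x t => u₀ + t • (x - u₀) with hc
  have hcP : ∀ x ∈ P, ∀ t ∈ Icc (0:ℝ) 1, c x t ∈ P := by
    intro x hx t ht
    have h := hconv hu₀ hx (by linarith [ht.2] : (0:ℝ) ≤ 1 - t) ht.1 (by ring)
    have : (1 - t) • u₀ + t • x = c x t := by simp only [hc]; module
    rwa [this] at h
  have hωc : ContinuousOn ω P := hω.continuousOn
  have hDωc : ContinuousOn (fderiv ℝ ω) P := hω.continuousOn_fderiv_of_isOpen hP (mod_cast le_top)
  have hωdiff : ∀ z ∈ P, HasFDerivAt ω (fderiv ℝ ω z) z := fun z hz =>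
    ((hω.contDiffAt (hP.mem_nhds hz)).differentiableAt (by simp)).hasFDerivAt
  refine ⟨fun x => ∫ t in (0:ℝ)..1, ω (c x t) (x - u₀), ?_⟩
  intro u hu
  obtain ⟨ε, hε, hball⟩ : ∃ ε > 0, Metric.closedBall u ε ⊆ P := by
    rcases Metric.isOpen_iff.1 hP u hu with ⟨δ, hδ, h⟩
    exact ⟨δ/2, by linarith, fun y hy =>
      h (lt_of_le_of_lt (Metric.mem_closedBall.1 hy) (by linarith))⟩
  -- compact set of segment points
  set K : Set E := (fun p : ℝ × E => c p.2 p.1) '' (Icc 0 1 ×ˢ Metric.closedBall u ε) with hK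
  have hKcpt : IsCompact K := by
    apply (isCompact_Icc.prod (isCompact_closedBall u ε)).image
    simp only [hc]
    fun_prop
  have hKP : K ⊆ P := by
    rintro _ ⟨⟨t, x⟩, ⟨ht, hx⟩, rfl⟩
    exact hcP x (hball hx) t ht
  obtain ⟨M₁, hM₁⟩ := hKcpt.exists_bound_of_continuousOn (hωc.mono hKP)
  obtain ⟨M₂, hM₂⟩ := hKcpt.exists_bound_of_continuousOn (f := fderiv ℝ ω) (by exact hDωc.mono hKP)
  have hcmem : ∀ x ∈ Metric.closedBall u ε, ∀ t ∈ Icc (0:ℝ) 1, c x t ∈ K := by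
    intro x hx t ht; exact ⟨(t, x), ⟨ht, hx⟩, rfl⟩
  -- the integrand and its derivative in x
  set F : E → ℝ → ℝ := fun x t => ω (c x t) (x - u₀) with hF
  set F' : E → ℝ → (E →L[ℝ] ℝ) := fun x t =>
    (ω (c x t)).comp (ContinuousLinearMap.id ℝ E) +
      ((fderiv ℝ ω (c x t)).comp (t • ContinuousLinearMap.id ℝ E)).flip (x - u₀) with hF'
  have hIsub : Ι (0:ℝ) 1 ⊆ Icc (0:ℝ) 1 := by
    rw [uIoc_of_le zero_le_one]; exact Ioc_subset_Icc_self
  have hcx : ∀ x ∈ Metric.closedBall u ε, ∀ t ∈ Icc (0:ℝ) 1, c x t ∈ P :=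
    fun x hx t ht => hKP (hcmem x hx t ht)
  have hcont_c : ∀ x, Continuous (fun t => c x t) := by intro x; simp only [hc]; fun_prop
  -- differentiability of F in x
  have h_diff : ∀ t ∈ Ι (0:ℝ) 1, ∀ x ∈ Metric.ball u ε, HasFDerivAt (fun y => F y t) (F' x t) x := by
    intro t ht x hx
    have hxP : c x t ∈ P := hcx x (Metric.ball_subset_closedBall hx) t (hIsub ht)
    have h₁ : HasFDerivAt (fun y => c y t) (t • ContinuousLinearMap.id ℝ E) x := by
      have : HasFDerivAt (fun y : E => t • (y - u₀)) (t • ContinuousLinearMap.id ℝ E) x :=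
        ((hasFDerivAt_id x).sub_const u₀).const_smul t
      exact this.const_add u₀
    have h₂ := (hωdiff _ hxP).comp x h₁
    have h₃ : HasFDerivAt (fun y : E => y - u₀) (ContinuousLinearMap.id ℝ E) x :=
      (hasFDerivAt_id x).sub_const u₀
    exact h₂.clm_apply h₃
  -- continuity of F' in t
  have hF'cont : ∀ x ∈ Metric.closedBall u ε, ContinuousOn (F' x) (Icc (0:ℝ) 1) := by
    intro x hx
    have hc1 : ContinuousOn (fun t => ω (c x t)) (Icc (0:ℝ) 1) :=
      hωc.comp (hcont_c x).continuousOn (fun t ht => hcx x hx t ht)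
    have hc2 : ContinuousOn (fun t => fderiv ℝ ω (c x t)) (Icc (0:ℝ) 1) :=
      hDωc.comp (hcont_c x).continuousOn (fun t ht => hcx x hx t ht)
    have hc3 : ContinuousOn (fun t => (fderiv ℝ ω (c x t)).comp
        (t • ContinuousLinearMap.id ℝ E)) (Icc (0:ℝ) 1) :=
      hc2.clm_comp (by fun_prop)
    have hc4 : ContinuousOn (fun t => ((fderiv ℝ ω (c x t)).comp
        (t • ContinuousLinearMap.id ℝ E)).flip (x - u₀)) (Icc (0:ℝ) 1) := by
      have : Continuous (fun L : E →L[ℝ] (E →L[ℝ] ℝ) => L.flip (x - u₀)) := by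
        have h := ((ContinuousLinearMap.apply ℝ (E →L[ℝ] ℝ) (x - u₀)).continuous).comp
          (ContinuousLinearMap.flipₗᵢ ℝ E E ℝ).continuous
        exact h
      exact this.comp_continuousOn hc3
    exact (hc1.clm_comp continuousOn_const).add hc4
  -- bound
  set bnd : ℝ := M₁ + M₂ * (ε + ‖u - u₀‖) with hbnd
  have h_bound : ∀ t ∈ Ι (0:ℝ) 1, ∀ x ∈ Metric.ball u ε, ‖F' x t‖ ≤ bnd := by
    intro t ht x hx
    have htI : t ∈ Icc (0:ℝ) 1 := hIsub ht
    have hxc : x ∈ Metric.closedBall u ε := Metric.ball_subset_closedBall hx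
    have hxP : c x t ∈ K := hcmem x hxc t htI
    have hn1 : ‖fderiv ℝ ω (c x t)‖ ≤ M₂ := hM₂ _ hxP
    have hn0 : ‖ω (c x t)‖ ≤ M₁ := hM₁ _ hxP
    have hn2 : ‖t • ContinuousLinearMap.id ℝ E‖ ≤ 1 := by
      have habs : ‖t‖ ≤ 1 := by
        rw [Real.norm_eq_abs]; exact abs_le.2 ⟨by linarith [htI.1], htI.2⟩
      have hid : ‖ContinuousLinearMap.id ℝ E‖ ≤ 1 := ContinuousLinearMap.norm_id_le
      calc ‖t • ContinuousLinearMap.id ℝ E‖ ≤ ‖t‖ * ‖ContinuousLinearMap.id ℝ E‖ :=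
            ContinuousLinearMap.opNorm_smul_le _ _
        _ ≤ 1 * 1 := mul_le_mul habs hid (norm_nonneg _) zero_le_one
        _ = 1 := one_mul 1
    have hn3 : ‖x - u₀‖ ≤ ε + ‖u - u₀‖ := by
      calc ‖x - u₀‖ ≤ ‖x - u‖ + ‖u - u₀‖ := by
            simpa using norm_add_le (x - u) (u - u₀)
        _ ≤ ε + ‖u - u₀‖ := by
            have := Metric.mem_closedBall.1 hxc
            rw [dist_eq_norm] at this; linarith
    have hcomp : ‖(fderiv ℝ ω (c x t)).comp (t • ContinuousLinearMap.id ℝ E)‖ ≤ M₂ := by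
      calc ‖(fderiv ℝ ω (c x t)).comp (t • ContinuousLinearMap.id ℝ E)‖
          ≤ ‖fderiv ℝ ω (c x t)‖ * ‖t • ContinuousLinearMap.id ℝ E‖ :=
            ContinuousLinearMap.opNorm_comp_le _ _
        _ ≤ M₂ * 1 := mul_le_mul hn1 hn2 (norm_nonneg _) ((norm_nonneg (fderiv ℝ ω (c x t))).trans hn1)
        _ = M₂ := by ring
    have hflip : ‖((fderiv ℝ ω (c x t)).comp (t • ContinuousLinearMap.id ℝ E)).flip (x - u₀)‖
        ≤ M₂ * (ε + ‖u - u₀‖) := by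
      calc ‖((fderiv ℝ ω (c x t)).comp (t • ContinuousLinearMap.id ℝ E)).flip (x - u₀)‖
          ≤ ‖((fderiv ℝ ω (c x t)).comp (t • ContinuousLinearMap.id ℝ E)).flip‖ * ‖x - u₀‖ :=
            ContinuousLinearMap.le_opNorm _ _
        _ = ‖(fderiv ℝ ω (c x t)).comp (t • ContinuousLinearMap.id ℝ E)‖ * ‖x - u₀‖ := by
            rw [ContinuousLinearMap.opNorm_flip]
        _ ≤ M₂ * (ε + ‖u - u₀‖) :=
            mul_le_mul hcomp hn3 (norm_nonneg _)
              ((norm_nonneg ((fderiv ℝ ω (c x t)).comp (t • ContinuousLinearMap.id ℝ E))).trans hcomp)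
    calc ‖F' x t‖ ≤ ‖(ω (c x t)).comp (ContinuousLinearMap.id ℝ E)‖ +
          ‖((fderiv ℝ ω (c x t)).comp (t • ContinuousLinearMap.id ℝ E)).flip (x - u₀)‖ :=
            norm_add_le _ _
      _ ≤ M₁ + M₂ * (ε + ‖u - u₀‖) := by
          rw [ContinuousLinearMap.comp_id]; exact add_le_add hn0 hflip
  -- measurability
  have hFcont : ∀ x ∈ Metric.closedBall u ε, ContinuousOn (F x) (Icc (0:ℝ) 1) := by
    intro x hx
    exact (hωc.comp (hcont_c x).continuousOn (fun t ht => hcx x hx t ht)).clm_apply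
      continuousOn_const
  have hF_meas : ∀ᶠ x in nhds u, AEStronglyMeasurable (F x) (volume.restrict (Ι (0:ℝ) 1)) := by
    filter_upwards [Metric.closedBall_mem_nhds u hε] with x hx
    exact ContinuousOn.aestronglyMeasurable ((hFcont x hx).mono hIsub) measurableSet_uIoc
  have hF_int : IntervalIntegrable (F u) volume 0 1 := by
    apply ContinuousOn.intervalIntegrable
    rw [uIcc_of_le zero_le_one]
    exact hFcont u (Metric.mem_closedBall_self hε.le)
  have hF'contu : ContinuousOn (F' u) (uIcc (0:ℝ) 1) := by
    rw [uIcc_of_le zero_le_one]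
    exact hF'cont u (Metric.mem_closedBall_self hε.le)
  have hF'_meas : AEStronglyMeasurable (F' u) (volume.restrict (Ι (0:ℝ) 1)) :=
    ContinuousOn.aestronglyMeasurable
      ((hF'cont u (Metric.mem_closedBall_self hε.le)).mono hIsub) measurableSet_uIoc
  have key := intervalIntegral.hasFDerivAt_integral_of_dominated_of_fderiv_le
    (μ := volume) (F := F) (F' := F') (bound := fun _ => bnd) (Metric.ball_mem_nhds u hε) hF_meas hF_int hF'_meas
    (Filter.Eventually.of_forall h_bound) intervalIntegrable_const
    (Filter.Eventually.of_forall h_diff)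
  -- FTC computation
  have hderiv : ∀ t ∈ uIcc (0:ℝ) 1, HasDerivAt (fun s => s • ω (c u s)) (F' u t) t := by
    intro t ht
    rw [uIcc_of_le zero_le_one] at ht
    have hxP : c u t ∈ P := hcx u (Metric.mem_closedBall_self hε.le) t ht
    have hd1 : HasDerivAt (fun s : ℝ => c u s) (u - u₀) t := by
      have h0 : HasDerivAt (fun s : ℝ => s • (u - u₀)) ((1:ℝ) • (u - u₀)) t :=
        (hasDerivAt_id t).smul_const (u - u₀)
      simpa only [one_smul] using h0.const_add u₀
    have hd3 : HasDerivAt (fun s => ω (c u s)) (fderiv ℝ ω (c u t) (u - u₀)) t :=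
      (hωdiff _ hxP).comp_hasDerivAt t hd1
    have hd4 : HasDerivAt (fun s => s • ω (c u s))
        (t • fderiv ℝ ω (c u t) (u - u₀) + (1:ℝ) • ω (c u t)) t := by
      exact (hasDerivAt_id t).fun_smul hd3
    convert hd4 using 1
    refine ContinuousLinearMap.ext fun h => ?_
    simp only [F', ContinuousLinearMap.add_apply, ContinuousLinearMap.coe_comp',
      Function.comp_apply, ContinuousLinearMap.flip_apply, ContinuousLinearMap.smul_apply,
      ContinuousLinearMap.coe_id', id_eq, one_smul, smul_eq_mul, _root_.map_smul]
    rw [hsym _ hxP h (u - u₀)]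
    ring
  have hgint : IntervalIntegrable (F' u) volume 0 1 :=
    hF'contu.intervalIntegrable
  have hFTC := intervalIntegral.integral_eq_sub_of_hasDerivAt hderiv hgint
  have hval : (∫ t in (0:ℝ)..1, F' u t) = ω u := by
    rw [hFTC]
    have h1 : c u 1 = u := by simp [hc]
    simp [h1]
  rw [hval] at key
  exact key


/-! ### Matrices as continuous linear maps, and the inverse function theorem -/

/-- The continuous linear map associated to a matrix (`mulVec`). -/
def matCLM (M : Matrix (Fin N) (Fin N) ℝ) : E →L[ℝ] E :=
  LinearMap.toContinuousLinearMap (Matrix.toLin' M)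

lemma matCLM_apply (M : Matrix (Fin N) (Fin N) ℝ) (x : E) (j : Fin N) :
    matCLM M x j = ∑ i, M j i * x i := by
  simp [matCLM, Matrix.toLin'_apply, Matrix.mulVec, dotProduct]

lemma exists_cle {M : Matrix (Fin N) (Fin N) ℝ} (h : IsUnit M) :
    ∃ e : E ≃L[ℝ] E, (e : E →L[ℝ] E) = matCLM M := by
  have hdet : IsUnit M.det := (Matrix.isUnit_iff_isUnit_det M).1 h
  refine ⟨LinearEquiv.toContinuousLinearEquiv
    (LinearEquiv.ofLinear (Matrix.toLin' M) (Matrix.toLin' M⁻¹) ?_ ?_), ?_⟩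
  · rw [← Matrix.toLin'_mul, Matrix.mul_nonsing_inv _ hdet, Matrix.toLin'_one]
  · rw [← Matrix.toLin'_mul, Matrix.nonsing_inv_mul _ hdet, Matrix.toLin'_one]
  · ext x
    rfl

/-- Inverse function theorem packaging. -/
theorem ift_package {P : Set E} (hP : IsOpen P)
    {f : E → E} (hf : ContDiffOn ℝ (⊤:ℕ∞) f P)
    {L : E → (E →L[ℝ] E)}
    (hDf : ∀ u ∈ P, HasFDerivAt f (L u) u)
    (hinv : ∀ u ∈ P, ∃ e : E ≃L[ℝ] E, (e : E →L[ℝ] E) = L u)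
    {u₀ : E} (hu₀ : u₀ ∈ P) :
    ∃ V : Set E, IsOpen V ∧ u₀ ∈ V ∧ V ⊆ P ∧ Set.InjOn f V ∧ IsOpen (f '' V) ∧
      ∃ ψ : E → E, ContDiffOn ℝ (⊤:ℕ∞) ψ (f '' V) ∧ ∀ u ∈ V, ψ (f u) = u := by
  obtain ⟨e₀, he₀⟩ := hinv u₀ hu₀
  have hfa : ContDiffAt ℝ (⊤:ℕ∞) f u₀ := hf.contDiffAt (hP.mem_nhds hu₀)
  have hone : ((⊤:ℕ∞) : WithTop ℕ∞) ≠ 0 := by simp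
  have hd0 : HasFDerivAt f (e₀ : E →L[ℝ] E) u₀ := by rw [he₀]; exact hDf u₀ hu₀
  set Φ := hfa.toOpenPartialHomeomorph f hd0 hone with hΦ
  have hcoe : (Φ : E → E) = f := rfl
  have hsrc : u₀ ∈ Φ.source := hfa.mem_toOpenPartialHomeomorph_source hd0 hone
  refine ⟨Φ.source ∩ P, Φ.open_source.inter hP, ⟨hsrc, hu₀⟩, inter_subset_right,
    ?_, ?_, Φ.symm, ?_, ?_⟩
  · have := Φ.injOn.mono (inter_subset_left : Φ.source ∩ P ⊆ Φ.source)
    rwa [hcoe] at this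
  · have := Φ.isOpen_image_of_subset_source (Φ.open_source.inter hP)
      (inter_subset_left : Φ.source ∩ P ⊆ Φ.source)
    rwa [hcoe] at this
  · intro y hy
    have hy' : y ∈ Φ '' (Φ.source ∩ P) := by rwa [hcoe]
    obtain ⟨x, hx, rfl⟩ := hy'
    have hxP : x ∈ P := hx.2
    have hxsrc : x ∈ Φ.source := hx.1
    have htgt : Φ x ∈ Φ.target := Φ.map_source hxsrc
    have hsymm : Φ.symm (Φ x) = x := Φ.left_inv hxsrc
    obtain ⟨e, he⟩ := hinv x hxP
    have hdx : HasFDerivAt (Φ : E → E) (e : E →L[ℝ] E) (Φ.symm (Φ x)) := by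
      rw [hsymm, hcoe, he]; exact hDf x hxP
    have hcd : ContDiffAt ℝ (⊤:ℕ∞) (Φ : E → E) (Φ.symm (Φ x)) := by
      rw [hsymm, hcoe]; exact hf.contDiffAt (hP.mem_nhds hxP)
    exact (Φ.contDiffAt_symm htgt hdx hcd).contDiffWithinAt
  · intro u hu
    have := Φ.left_inv hu.1
    rwa [hcoe] at this


/-! ### Derivatives of `eRed` -/

lemma hasFDerivAt_eRed {P Q : Set E} (hP : IsOpen P) (hQ : IsOpen Q)
    (A B : Fin N → Fin N → E → ℝ)
    (hA : ∀ i j, ContDiffOn ℝ (⊤:ℕ∞) (A i j) P)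
    (hB : ∀ j α, ContDiffOn ℝ (⊤:ℕ∞) (B j α) Q)
    (j α : Fin N) {p : E × E} (hp : p ∈ P ×ˢ Q) :
    HasFDerivAt (eRed A B j α)
      (∑ k, ((B k α p.2 • ((fderiv ℝ (A j k) p.1).comp (ContinuousLinearMap.fst ℝ E E)) +
             A j k p.1 • ((fderiv ℝ (B k α) p.2).comp (ContinuousLinearMap.snd ℝ E E)) :
             (E × E) →L[ℝ] ℝ))) p := by
  have h1 : p.1 ∈ P := hp.1
  have h2 : p.2 ∈ Q := hp.2
  have hterm : ∀ k : Fin N, HasFDerivAt (fun q : E × E => A j k q.1 * B k α q.2)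
      (B k α p.2 • ((fderiv ℝ (A j k) p.1).comp (ContinuousLinearMap.fst ℝ E E)) +
       A j k p.1 • ((fderiv ℝ (B k α) p.2).comp (ContinuousLinearMap.snd ℝ E E))) p := by
    intro k
    have hA' : HasFDerivAt (fun q : E × E => A j k q.1)
        ((fderiv ℝ (A j k) p.1).comp (ContinuousLinearMap.fst ℝ E E)) p :=
      ((((hA j k).contDiffAt (hP.mem_nhds h1)).differentiableAt
        (by simp)).hasFDerivAt).comp p hasFDerivAt_fst
    have hB' : HasFDerivAt (fun q : E × E => B k α q.2)
        ((fderiv ℝ (B k α) p.2).comp (ContinuousLinearMap.snd ℝ E E)) p :=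
      ((((hB k α).contDiffAt (hQ.mem_nhds h2)).differentiableAt
        (by simp)).hasFDerivAt).comp p hasFDerivAt_snd
    have hm := hA'.mul hB'
    rw [add_comm]
    exact hm
  exact HasFDerivAt.fun_sum (fun k _ => hterm k)

lemma dU2_eRed {P Q : Set E} (hP : IsOpen P) (hQ : IsOpen Q)
    (A B : Fin N → Fin N → E → ℝ)
    (hA : ∀ i j, ContDiffOn ℝ (⊤:ℕ∞) (A i j) P)
    (hB : ∀ j α, ContDiffOn ℝ (⊤:ℕ∞) (B j α) Q)
    (i j α : Fin N) {p : E × E} (hp : p ∈ P ×ˢ Q) :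
    dU2 i (eRed A B j α) p = ∑ k, pderiv' i (A j k) p.1 * B k α p.2 := by
  have h := (hasFDerivAt_eRed hP hQ A B hA hB j α hp).fderiv
  rw [dU2, h]
  rw [ContinuousLinearMap.sum_apply]
  refine Finset.sum_congr rfl fun k _ => ?_
  simp [pderiv']
  ring

lemma dV2_eRed {P Q : Set E} (hP : IsOpen P) (hQ : IsOpen Q)
    (A B : Fin N → Fin N → E → ℝ)
    (hA : ∀ i j, ContDiffOn ℝ (⊤:ℕ∞) (A i j) P)
    (hB : ∀ j α, ContDiffOn ℝ (⊤:ℕ∞) (B j α) Q)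
    (j β α : Fin N) {p : E × E} (hp : p ∈ P ×ˢ Q) :
    dV2 α (eRed A B j β) p = ∑ k, A j k p.1 * pderiv' α (B k β) p.2 := by
  have h := (hasFDerivAt_eRed hP hQ A B hA hB j β hp).fderiv
  rw [dV2, h]
  rw [ContinuousLinearMap.sum_apply]
  refine Finset.sum_congr rfl fun k _ => ?_
  simp [pderiv']

/-! ### Matrix algebra lemmas -/

/-- a row vector annihilated by an invertible matrix vanishes -/
lemma row_eq_zero {w : Fin N → ℝ} {M : Matrix (Fin N) (Fin N) ℝ} (hM : IsUnit M)
    (h : ∀ α, ∑ k, w k * M k α = 0) : w = 0 := by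
  have hdet : IsUnit M.det := (Matrix.isUnit_iff_isUnit_det M).1 hM
  have hv : Matrix.vecMul w M = 0 := by
    ext α
    simpa [Matrix.vecMul, dotProduct] using h α
  have := congrArg (fun v => Matrix.vecMul v M⁻¹) hv
  simpa [Matrix.vecMul_vecMul, Matrix.mul_nonsing_inv _ hdet] using this

/-- triple sum rearrangement -/
lemma sum_swap3 (a c : Fin N → ℝ) (b d : Fin N → Fin N → ℝ) :
    ∑ α, (∑ k, a k * b k α) * (∑ l, c l * d l α)
      = ∑ k, ∑ l, (a k * c l) * (∑ α, b k α * d l α) := by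
  have h1 : ∀ α : Fin N, (∑ k, a k * b k α) * (∑ l, c l * d l α)
      = ∑ k, ∑ l, (a k * c l) * (b k α * d l α) := by
    intro α
    rw [Finset.sum_mul_sum]
    exact Finset.sum_congr rfl fun k _ => Finset.sum_congr rfl fun l _ => by ring
  calc ∑ α, (∑ k, a k * b k α) * (∑ l, c l * d l α)
      = ∑ α, ∑ k, ∑ l, (a k * c l) * (b k α * d l α) :=
        Finset.sum_congr rfl fun α _ => h1 α
    _ = ∑ k, ∑ α, ∑ l, (a k * c l) * (b k α * d l α) := Finset.sum_comm
    _ = ∑ k, ∑ l, ∑ α, (a k * c l) * (b k α * d l α) :=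
        Finset.sum_congr rfl fun k _ => Finset.sum_comm
    _ = ∑ k, ∑ l, (a k * c l) * (∑ α, b k α * d l α) :=
        Finset.sum_congr rfl fun k _ => Finset.sum_congr rfl fun l _ =>
          (Finset.mul_sum _ _ _).symm

/-- sandwiching by an invertible matrix: if `X G Xᵀ = 0` then `G = 0`. -/
lemma sandwich_eq_zero {X G : Matrix (Fin N) (Fin N) ℝ} (hX : IsUnit X)
    (h : ∀ p q, ∑ k, ∑ l, (X p k * X q l) * G k l = 0) : G = 0 := by
  have hdet : IsUnit X.det := (Matrix.isUnit_iff_isUnit_det X).1 hX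
  have hdetT : IsUnit Xᵀ.det := by rwa [Matrix.det_transpose]
  have hzero : X * G * Xᵀ = 0 := by
    ext p q
    rw [Matrix.zero_apply, ← h p q]
    rw [Matrix.mul_apply]
    rw [Finset.sum_comm]
    refine Finset.sum_congr rfl fun l _ => ?_
    rw [Matrix.mul_apply, Finset.sum_mul]
    exact Finset.sum_congr rfl fun k _ => by
      simp [Matrix.transpose_apply]; ring
  calc G = (X⁻¹ * X) * G * (Xᵀ * (Xᵀ)⁻¹) := by
        rw [Matrix.nonsing_inv_mul _ hdet, Matrix.mul_nonsing_inv _ hdetT,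
          Matrix.one_mul, Matrix.mul_one]
    _ = X⁻¹ * (X * G * Xᵀ) * (Xᵀ)⁻¹ := by simp only [Matrix.mul_assoc]
    _ = 0 := by rw [hzero]; simp

/-! ### Smoothness of determinants and inverse matrices -/

lemma contDiffOn_det {Q : Set E} (M : E → Matrix (Fin N) (Fin N) ℝ)
    (h : ∀ i j, ContDiffOn ℝ (⊤:ℕ∞) (fun v => M v i j) Q) :
    ContDiffOn ℝ (⊤:ℕ∞) (fun v => (M v).det) Q := by
  have heq : (fun v => (M v).det) = fun v =>
      ∑ σ : Equiv.Perm (Fin N), ((Equiv.Perm.sign σ : ℤ) : ℝ) * ∏ i, M v (σ i) i := by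
    funext v; rw [Matrix.det_apply']
  rw [heq]
  exact ContDiffOn.sum fun σ _ =>
    contDiffOn_const.mul (contDiffOn_prod (fun i _ => h (σ i) i))

lemma contDiffOn_inv_entry {Q : Set E} (B : Fin N → Fin N → E → ℝ)
    (hB : ∀ j α, ContDiffOn ℝ (⊤:ℕ∞) (B j α) Q)
    (hBinv : ∀ v ∈ Q, IsUnit (Matrix.of fun j α => B j α v)) (α β : Fin N) :
    ContDiffOn ℝ (⊤:ℕ∞) (fun v => ((Matrix.of fun j γ => B j γ v)⁻¹) α β) Q := by
  have hdet : ContDiffOn ℝ (⊤:ℕ∞) (fun v => (Matrix.of fun j γ => B j γ v).det) Q :=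
    contDiffOn_det _ (fun i j => hB i j)
  have hdetne : ∀ v ∈ Q, (Matrix.of fun j γ => B j γ v).det ≠ 0 := fun v hv =>
    ((Matrix.isUnit_iff_isUnit_det _).1 (hBinv v hv)).ne_zero
  have hadj : ContDiffOn ℝ (⊤:ℕ∞)
      (fun v => (Matrix.of fun j γ => B j γ v).adjugate α β) Q := by
    have heq : (fun v => (Matrix.of fun j γ => B j γ v).adjugate α β)
        = fun v => ((Matrix.of fun j γ => B j γ v).updateRow β (Pi.single α 1)).det := by
      funext v; rw [Matrix.adjugate_apply]
    rw [heq]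
    apply contDiffOn_det
    intro i j
    by_cases hi : i = β
    · subst hi
      simp only [Matrix.updateRow_self]
      exact contDiffOn_const
    · simp only [Matrix.updateRow_ne hi]
      exact hB i j
  have heq : (fun v => ((Matrix.of fun j γ => B j γ v)⁻¹) α β)
      = fun v => ((Matrix.of fun j γ => B j γ v).det)⁻¹ *
          (Matrix.of fun j γ => B j γ v).adjugate α β := by
    funext v
    rw [Matrix.inv_def, Matrix.smul_apply, Ring.inverse_eq_inv', smul_eq_mul]
  rw [heq]
  exact (hdet.inv hdetne).mul hadj

/-! ### pderiv' rules -/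

lemma pderiv'_sum_mul {Q : Set E} (hQ : IsOpen Q) (f g : Fin N → E → ℝ)
    (hf : ∀ k, ContDiffOn ℝ (⊤:ℕ∞) (f k) Q) (hg : ∀ k, ContDiffOn ℝ (⊤:ℕ∞) (g k) Q)
    {v : E} (hv : v ∈ Q) (γ : Fin N) :
    pderiv' γ (fun w => ∑ k, f k w * g k w) v
      = ∑ k, (pderiv' γ (f k) v * g k v + f k v * pderiv' γ (g k) v) := by
  have hterm : ∀ k : Fin N, HasFDerivAt (fun w => f k w * g k w)
      (f k v • fderiv ℝ (g k) v + g k v • fderiv ℝ (f k) v) v := by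
    intro k
    exact (((hf k).contDiffAt (hQ.mem_nhds hv)).differentiableAt
        (by simp)).hasFDerivAt.mul
      (((hg k).contDiffAt (hQ.mem_nhds hv)).differentiableAt
        (by simp)).hasFDerivAt
  have hsum := HasFDerivAt.fun_sum (fun k (_ : k ∈ Finset.univ) => hterm k)
  rw [pderiv', hsum.fderiv, ContinuousLinearMap.sum_apply]
  refine Finset.sum_congr rfl fun k _ => ?_
  simp [pderiv']
  ring

lemma pderiv'_congr_const {Q : Set E} (hQ : IsOpen Q) {f : E → ℝ} {c : ℝ}
    (h : ∀ w ∈ Q, f w = c) {v : E} (hv : v ∈ Q) (γ : Fin N) : pderiv' γ f v = 0 := by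
  have heq : f =ᶠ[nhds v] fun _ => c :=
    Filter.eventuallyEq_of_mem (hQ.mem_nhds hv) h
  rw [pderiv', heq.fderiv_eq]
  simp

end Stmt12
end

namespace Stmt12
variable {N : ℕ}
local notation "E" => (Fin N → ℝ)

/-- `B` times its inverse matrix, entrywise. -/
lemma BM_id {Q : Set E} (B : Fin N → Fin N → E → ℝ)
    (hBinv : ∀ v ∈ Q, IsUnit (Matrix.of fun j α => B j α v)) :
    ∀ v ∈ Q, ∀ j δ, ∑ α, B j α v * ((Matrix.of fun j' α' => B j' α' v)⁻¹) α δ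
      = if j = δ then 1 else 0 := by
  intro v hv j δ
  have hdet : IsUnit (Matrix.of fun j' α' => B j' α' v).det :=
    (Matrix.isUnit_iff_isUnit_det _).1 (hBinv v hv)
  have h := Matrix.mul_nonsing_inv _ hdet
  have happ := congrFun (congrFun h j) δ
  simpa [Matrix.mul_apply, Matrix.one_apply] using happ

/-- Symmetry of partials of `A` from (E1). -/
lemma A_partials_symm {P Q : Set E} (hP : IsOpen P) (hQ : IsOpen Q) (hQne : Q.Nonempty)
    (A B : Fin N → Fin N → E → ℝ)
    (hA : ∀ i j, ContDiffOn ℝ (⊤:ℕ∞) (A i j) P)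
    (hB : ∀ j α, ContDiffOn ℝ (⊤:ℕ∞) (B j α) Q)
    (hBinv : ∀ v ∈ Q, IsUnit (Matrix.of fun j α => B j α v))
    (hE1 : ∀ i j α, ∀ p ∈ P ×ˢ Q, dU2 i (eRed A B j α) p = dU2 j (eRed A B i α) p) :
    ∀ i j k, ∀ u ∈ P, pderiv' i (A j k) u = pderiv' j (A i k) u := by
  intro i j k u hu
  obtain ⟨v, hv⟩ := hQne
  have hp : ((u, v) : E × E) ∈ P ×ˢ Q := ⟨hu, hv⟩
  have hrow : ∀ α, ∑ m, (pderiv' i (A j m) u - pderiv' j (A i m) u) *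
      (Matrix.of fun j' α' => B j' α' v) m α = 0 := by
    intro α
    have h1 := hE1 i j α (u, v) hp
    rw [dU2_eRed hP hQ A B hA hB i j α hp, dU2_eRed hP hQ A B hA hB j i α hp] at h1
    simp only [Matrix.of_apply, sub_mul, Finset.sum_sub_distrib]
    exact sub_eq_zero.2 h1
  have hz := row_eq_zero (hBinv v hv) hrow
  have := congrFun hz k
  simp only [Pi.zero_apply, sub_eq_zero] at this
  exact this

/-- The integrability condition `C = 0` for `B`, from (E2). -/
lemma C_eq_zero {P Q : Set E} (hP : IsOpen P) (hQ : IsOpen Q) (hPne : P.Nonempty)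
    (A B : Fin N → Fin N → E → ℝ)
    (hA : ∀ i j, ContDiffOn ℝ (⊤:ℕ∞) (A i j) P)
    (hB : ∀ j α, ContDiffOn ℝ (⊤:ℕ∞) (B j α) Q)
    (hAinv : ∀ u ∈ P, IsUnit (Matrix.of fun i j => A i j u))
    (hE2 : ∀ i j β, ∀ p ∈ P ×ˢ Q,
        ∑ α, (eRed A B i α p * dV2 α (eRed A B j β) p -
              eRed A B j α p * dV2 α (eRed A B i β) p) = 0) :
    ∀ v ∈ Q, ∀ k l β, ∑ α, (B k α v * pderiv' α (B l β) v
        - B l α v * pderiv' α (B k β) v) = 0 := by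
  intro v hv k l β
  obtain ⟨u, hu⟩ := hPne
  have hp : ((u, v) : E × E) ∈ P ×ˢ Q := ⟨hu, hv⟩
  set H : Fin N → Fin N → ℝ := fun k' l' => ∑ α, B k' α v * pderiv' α (B l' β) v with hH
  have hG : (Matrix.of fun k' l' => H k' l' - H l' k') = 0 := by
    apply sandwich_eq_zero (hAinv u hu)
    intro p q
    simp only [Matrix.of_apply]
    have hrw : ∀ a b α : Fin N,
        eRed A B a α (u,v) * dV2 α (eRed A B b β) (u,v)
          = (∑ m, A a m u * B m α v) * (∑ m, A b m u * pderiv' α (B m β) v) := by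
      intro a b α
      rw [dV2_eRed hP hQ A B hA hB b β α hp]
      rfl
    have h2 : ∑ α, ((∑ m, A p m u * B m α v) * (∑ m, A q m u * pderiv' α (B m β) v)
        - (∑ m, A q m u * B m α v) * (∑ m, A p m u * pderiv' α (B m β) v)) = 0 := by
      have heq : ∑ α, ((∑ m, A p m u * B m α v) * (∑ m, A q m u * pderiv' α (B m β) v)
          - (∑ m, A q m u * B m α v) * (∑ m, A p m u * pderiv' α (B m β) v))
          = ∑ α, (eRed A B p α (u,v) * dV2 α (eRed A B q β) (u,v) -
              eRed A B q α (u,v) * dV2 α (eRed A B p β) (u,v)) :=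
        Finset.sum_congr rfl fun α _ => by rw [hrw p q α, hrw q p α]
      rw [heq]
      exact hE2 p q β (u, v) hp
    rw [Finset.sum_sub_distrib,
      sum_swap3 (fun m => A p m u) (fun m => A q m u)
        (fun m α => B m α v) (fun m α => pderiv' α (B m β) v),
      sum_swap3 (fun m => A q m u) (fun m => A p m u)
        (fun m α => B m α v) (fun m α => pderiv' α (B m β) v)] at h2
    have hsw : ∑ k', ∑ l', (A q k' u * A p l' u) * H k' l'
        = ∑ k', ∑ l', (A p k' u * A q l' u) * H l' k' := by
      calc ∑ k', ∑ l', (A q k' u * A p l' u) * H k' l'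
          = ∑ l', ∑ k', (A q k' u * A p l' u) * H k' l' := Finset.sum_comm
        _ = ∑ k', ∑ l', (A p k' u * A q l' u) * H l' k' :=
            Finset.sum_congr rfl fun l' _ => Finset.sum_congr rfl fun k' _ => by ring
    rw [hsw] at h2
    calc ∑ k', ∑ l', A p k' u * A q l' u * (H k' l' - H l' k')
        = ∑ k', ∑ l', ((A p k' u * A q l' u) * H k' l'
            - (A p k' u * A q l' u) * H l' k') := by
          refine Finset.sum_congr rfl fun k' _ => Finset.sum_congr rfl fun l' _ => by ring
      _ = 0 := by
          simp only [Finset.sum_sub_distrib]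
          exact h2
  have hG' := congrFun (congrFun hG k) l
  simp only [Matrix.of_apply, Matrix.zero_apply, sub_eq_zero] at hG'
  have hfin : H k l - H l k = 0 := by rw [hG']; ring
  calc ∑ α, (B k α v * pderiv' α (B l β) v - B l α v * pderiv' α (B k β) v)
      = H k l - H l k := by simp only [hH, Finset.sum_sub_distrib]
    _ = 0 := hfin

/-- Symmetry of partials of the inverse matrix entries, from `C = 0`. -/
lemma Minv_partials_symm {Q : Set E} (hQ : IsOpen Q)
    (B : Fin N → Fin N → E → ℝ)
    (hB : ∀ j α, ContDiffOn ℝ (⊤:ℕ∞) (B j α) Q)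
    (hBinv : ∀ v ∈ Q, IsUnit (Matrix.of fun j α => B j α v))
    (hC : ∀ v ∈ Q, ∀ k l β, ∑ α, (B k α v * pderiv' α (B l β) v
        - B l α v * pderiv' α (B k β) v) = 0) (β : Fin N) :
    ∀ v ∈ Q, ∀ γ α, pderiv' γ (fun w => ((Matrix.of fun j' δ' => B j' δ' w)⁻¹) α β) v
      = pderiv' α (fun w => ((Matrix.of fun j' δ' => B j' δ' w)⁻¹) γ β) v := by
  have hMsmooth : ∀ α δ, ContDiffOn ℝ (⊤:ℕ∞)
      (fun w => ((Matrix.of fun j' δ' => B j' δ' w)⁻¹) α δ) Q :=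
    fun α δ => contDiffOn_inv_entry B hB hBinv α δ
  intro v hv
  set Minv : Fin N → Fin N → E → ℝ :=
    fun α δ w => ((Matrix.of fun j' δ' => B j' δ' w)⁻¹) α δ with hMinv
  have hkey : ∀ j δ γ, ∑ α, (pderiv' γ (B j α) v * Minv α δ v
      + B j α v * pderiv' γ (Minv α δ) v) = 0 := by
    intro j δ γ
    rw [← pderiv'_sum_mul hQ (fun α => B j α) (fun α => Minv α δ)
      (fun α => hB j α) (fun α => hMsmooth α δ) hv γ]
    exact pderiv'_congr_const hQ (fun w hw => BM_id B hBinv w hw j δ) hv γ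
  set S : Fin N → Fin N → ℝ := fun γ α => pderiv' γ (Minv α β) v with hS
  have hT : ∀ p q : Fin N, ∑ γ, ∑ α, (B p γ v * B q α v) * S γ α
      = -∑ α, (∑ γ, B p γ v * pderiv' γ (B q α) v) * Minv α β v := by
    intro p q
    have hinner : ∀ γ, ∑ α, B q α v * S γ α
        = -∑ α, pderiv' γ (B q α) v * Minv α β v := by
      intro γ
      have hk := hkey q β γ
      rw [Finset.sum_add_distrib] at hk
      linarith
    calc ∑ γ, ∑ α, (B p γ v * B q α v) * S γ α
        = ∑ γ, B p γ v * (∑ α, B q α v * S γ α) := by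
          refine Finset.sum_congr rfl fun γ _ => ?_
          rw [Finset.mul_sum]
          exact Finset.sum_congr rfl fun α _ => by ring
      _ = ∑ γ, B p γ v * (-∑ α, pderiv' γ (B q α) v * Minv α β v) :=
          Finset.sum_congr rfl fun γ _ => by rw [hinner γ]
      _ = -∑ γ, ∑ α, (B p γ v * pderiv' γ (B q α) v) * Minv α β v := by
          rw [← Finset.sum_neg_distrib]
          refine Finset.sum_congr rfl fun γ _ => ?_
          rw [mul_neg]
          congr 1
          rw [Finset.mul_sum]
          exact Finset.sum_congr rfl fun α _ => by ring
      _ = -∑ α, ∑ γ, (B p γ v * pderiv' γ (B q α) v) * Minv α β v := by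
          rw [Finset.sum_comm]
      _ = -∑ α, (∑ γ, B p γ v * pderiv' γ (B q α) v) * Minv α β v := by
          congr 1
          refine Finset.sum_congr rfl fun α _ => ?_
          rw [Finset.sum_mul]
  have hG : (Matrix.of fun γ α => S γ α - S α γ) = 0 := by
    apply sandwich_eq_zero (hBinv v hv)
    intro p q
    simp only [Matrix.of_apply]
    have hswap : ∑ γ, ∑ α, (B p γ v * B q α v) * S α γ
        = ∑ γ, ∑ α, (B q γ v * B p α v) * S γ α := by
      calc ∑ γ, ∑ α, (B p γ v * B q α v) * S α γ
          = ∑ α, ∑ γ, (B p γ v * B q α v) * S α γ := Finset.sum_comm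
        _ = ∑ γ, ∑ α, (B q γ v * B p α v) * S γ α :=
            Finset.sum_congr rfl fun α _ => Finset.sum_congr rfl fun γ _ => by ring
    calc ∑ γ, ∑ α, B p γ v * B q α v * (S γ α - S α γ)
        = ∑ γ, ∑ α, ((B p γ v * B q α v) * S γ α - (B p γ v * B q α v) * S α γ) := by
          refine Finset.sum_congr rfl fun γ _ => Finset.sum_congr rfl fun α _ => by ring
      _ = (∑ γ, ∑ α, (B p γ v * B q α v) * S γ α)
            - ∑ γ, ∑ α, (B p γ v * B q α v) * S α γ := by
          simp only [Finset.sum_sub_distrib]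
      _ = (∑ γ, ∑ α, (B p γ v * B q α v) * S γ α)
            - ∑ γ, ∑ α, (B q γ v * B p α v) * S γ α := by rw [hswap]
      _ = (-∑ α, (∑ γ, B p γ v * pderiv' γ (B q α) v) * Minv α β v)
            - (-∑ α, (∑ γ, B q γ v * pderiv' γ (B p α) v) * Minv α β v) := by
          rw [hT p q, hT q p]
      _ = -∑ α, ((∑ γ, B p γ v * pderiv' γ (B q α) v)
            - (∑ γ, B q γ v * pderiv' γ (B p α) v)) * Minv α β v := by
          have hexp : ∑ α, ((∑ γ, B p γ v * pderiv' γ (B q α) v)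
              - (∑ γ, B q γ v * pderiv' γ (B p α) v)) * Minv α β v
              = (∑ α, (∑ γ, B p γ v * pderiv' γ (B q α) v) * Minv α β v)
                - ∑ α, (∑ γ, B q γ v * pderiv' γ (B p α) v) * Minv α β v := by
            rw [← Finset.sum_sub_distrib]
            exact Finset.sum_congr rfl fun α _ => by ring
          rw [hexp]
          ring
      _ = 0 := by
          have hz : ∀ α : Fin N, (∑ γ, B p γ v * pderiv' γ (B q α) v)
              - (∑ γ, B q γ v * pderiv' γ (B p α) v) = 0 := by
            intro α
            have := hC v hv p q α
            rwa [Finset.sum_sub_distrib] at this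
          simp only [hz, zero_mul, Finset.sum_const_zero, neg_zero]
  intro γ α
  have hG' := congrFun (congrFun hG γ) α
  simp only [Matrix.of_apply, Matrix.zero_apply, sub_eq_zero] at hG'
  exact hG'

end Stmt12

/-- If a reducible matrix `e_{iα} = Σⱼ A_{ij}(u) B_{jα}(v)` (with smooth,
everywhere invertible factors on convex open sets `P`, `Q`) satisfies (E1) and (E2),
then (1) `A` is the Jacobian matrix of a map `θ¹` on `P` which is a local diffeomorphism
at every point, and (2) near every point of `Q` there is a diffeomorphism `θ₂` onto an
open set whose inverse Jacobian matrix is `B`: `Σ_α B_{jα} ∂θ₂_β/∂v_α = δ_{jβ}`. -/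
theorem reducible_e_gives_new_marked_functions
    (N : ℕ) (hN : 1 ≤ N)
    (P Q : Set (Fin N → ℝ))
    (hPopen : IsOpen P) (hPconv : Convex ℝ P) (hPne : P.Nonempty)
    (hQopen : IsOpen Q) (hQconv : Convex ℝ Q) (hQne : Q.Nonempty)
    (A B : Fin N → Fin N → (Fin N → ℝ) → ℝ)
    (hAsmooth : ∀ i j, ContDiffOn ℝ (⊤ : ℕ∞) (A i j) P)
    (hBsmooth : ∀ j α, ContDiffOn ℝ (⊤ : ℕ∞) (B j α) Q)
    (hAinv : ∀ u ∈ P, IsUnit (Matrix.of fun i j => A i j u))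
    (hBinv : ∀ v ∈ Q, IsUnit (Matrix.of fun j α => B j α v))
    (hE1 : ∀ i j α, ∀ p ∈ P ×ˢ Q, dU2 i (eRed A B j α) p = dU2 j (eRed A B i α) p)
    (hE2 : ∀ i j β, ∀ p ∈ P ×ˢ Q,
        ∑ α, (eRed A B i α p * dV2 α (eRed A B j β) p -
              eRed A B j α p * dV2 α (eRed A B i β) p) = 0) :
    (∃ θ : Fin N → (Fin N → ℝ) → ℝ,
        (∀ j, ContDiffOn ℝ (⊤ : ℕ∞) (θ j) P) ∧
        (∀ i j, ∀ u ∈ P, A i j u = pderiv' i (θ j) u) ∧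
        (∀ u₀ ∈ P, ∃ V : Set (Fin N → ℝ),
            IsOpen V ∧ u₀ ∈ V ∧ V ⊆ P ∧
            Set.InjOn (fun u j => θ j u) V ∧
            IsOpen ((fun u j => θ j u) '' V) ∧
            ∃ ψ : (Fin N → ℝ) → (Fin N → ℝ),
              ContDiffOn ℝ (⊤ : ℕ∞) ψ ((fun u j => θ j u) '' V) ∧
              ∀ u ∈ V, ψ (fun j => θ j u) = u)) ∧
    (∀ q ∈ Q, ∃ Q' : Set (Fin N → ℝ),
        IsOpen Q' ∧ q ∈ Q' ∧ Q' ⊆ Q ∧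
        ∃ θ₂ : (Fin N → ℝ) → (Fin N → ℝ),
          ContDiffOn ℝ (⊤ : ℕ∞) θ₂ Q' ∧
          Set.InjOn θ₂ Q' ∧
          IsOpen (θ₂ '' Q') ∧
          (∃ ψ : (Fin N → ℝ) → (Fin N → ℝ),
              ContDiffOn ℝ (⊤ : ℕ∞) ψ (θ₂ '' Q') ∧ ∀ v ∈ Q', ψ (θ₂ v) = v) ∧
          (∀ v ∈ Q', ∀ j β,
              ∑ α, B j α v * pderiv' α (fun w => θ₂ w β) v =
                if j = β then 1 else 0)) := by
  classical
  obtain ⟨u₀, hu₀⟩ := id hPne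
  have hAsym := Stmt12.A_partials_symm hPopen hQopen hQne A B hAsmooth hBsmooth hBinv hE1
  have hωA : ∀ j : Fin N, ContDiffOn ℝ (⊤:ℕ∞)
      (fun u => Stmt12.coeffForm (fun i => A i j u)) P := fun j =>
    ContDiffOn.sum fun i _ => (hAsmooth i j).smul contDiffOn_const
  have hθex : ∀ j : Fin N, ∃ θj : (Fin N → ℝ) → ℝ,
      ∀ u ∈ P, HasFDerivAt θj (Stmt12.coeffForm (fun i => A i j u)) u := fun j =>
    Stmt12.poincare hPopen hPconv hu₀ _ (hωA j)
      (Stmt12.coeffForm_symm hPopen (fun i u => A i j u) (fun i => hAsmooth i j)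
        (fun k i u hu => hAsym k i j u hu))
  choose θ hθ using hθex
  have hθsmooth : ∀ j, ContDiffOn ℝ (⊤:ℕ∞) (θ j) P := by
    intro j
    refine (contDiffOn_infty_iff_fderiv_of_isOpen hPopen).2 ⟨?_, ?_⟩
    · exact fun u hu => (hθ j u hu).differentiableAt.differentiableWithinAt
    · exact (hωA j).congr (fun u hu => (hθ j u hu).fderiv)
  have hpd : ∀ i j, ∀ u ∈ P, A i j u = pderiv' i (θ j) u := by
    intro i j u hu
    rw [Stmt12.pderiv'_eq, (hθ j u hu).fderiv, Stmt12.coeffForm_bv]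
  have hDf : ∀ u ∈ P, HasFDerivAt (fun u (j : Fin N) => θ j u)
      (Stmt12.matCLM (Matrix.of fun j i => A i j u)) u := by
    intro u hu
    apply hasFDerivAt_pi''
    intro j
    have heq : (ContinuousLinearMap.proj (R := ℝ) (φ := fun _ : Fin N => ℝ) j).comp
        (Stmt12.matCLM (Matrix.of fun j' i => A i j' u))
        = Stmt12.coeffForm (fun i => A i j u) := by
      ext h
      simp [Stmt12.matCLM_apply, Stmt12.coeffForm_apply]
    rw [heq]
    exact hθ j u hu
  have hinvf : ∀ u ∈ P, ∃ e : (Fin N → ℝ) ≃L[ℝ] (Fin N → ℝ),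
      (e : (Fin N → ℝ) →L[ℝ] (Fin N → ℝ))
        = Stmt12.matCLM (Matrix.of fun j i => A i j u) := by
    intro u hu
    apply Stmt12.exists_cle
    apply (Matrix.isUnit_iff_isUnit_det _).2
    have htr : (Matrix.of fun j i => A i j u) = (Matrix.of fun i j => A i j u).transpose := rfl
    rw [htr, Matrix.det_transpose]
    exact (Matrix.isUnit_iff_isUnit_det _).1 (hAinv u hu)
  constructor
  · exact ⟨θ, hθsmooth, hpd, fun u₁ hu₁ =>
      Stmt12.ift_package (f := fun u (j : Fin N) => θ j u) hPopen
        (contDiffOn_pi.2 hθsmooth) hDf hinvf hu₁⟩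
  · intro q hq
    have hC := Stmt12.C_eq_zero hPopen hQopen hPne A B hAsmooth hBsmooth hAinv hE2
    have hMsmooth : ∀ α δ, ContDiffOn ℝ (⊤:ℕ∞)
        (fun w => ((Matrix.of fun j' δ' => B j' δ' w)⁻¹) α δ) Q :=
      fun α δ => Stmt12.contDiffOn_inv_entry B hBsmooth hBinv α δ
    have hωM : ∀ β : Fin N, ContDiffOn ℝ (⊤:ℕ∞)
        (fun v => Stmt12.coeffForm
          (fun α => ((Matrix.of fun j' δ' => B j' δ' v)⁻¹) α β)) Q :=
      fun β => ContDiffOn.sum fun α _ => (hMsmooth α β).smul contDiffOn_const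
    have hθex2 : ∀ β : Fin N, ∃ θβ : (Fin N → ℝ) → ℝ, ∀ v ∈ Q,
        HasFDerivAt θβ (Stmt12.coeffForm
          (fun α => ((Matrix.of fun j' δ' => B j' δ' v)⁻¹) α β)) v := fun β =>
      Stmt12.poincare hQopen hQconv hq _ (hωM β)
        (Stmt12.coeffForm_symm hQopen
          (fun α v => ((Matrix.of fun j' δ' => B j' δ' v)⁻¹) α β)
          (fun α => hMsmooth α β)
          (fun γ α v hv => Stmt12.Minv_partials_symm hQopen B hBsmooth hBinv hC β v hv γ α))
    choose θ₂f hθ₂f using hθex2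
    have hθ₂smooth : ∀ β, ContDiffOn ℝ (⊤:ℕ∞) (θ₂f β) Q := by
      intro β
      refine (contDiffOn_infty_iff_fderiv_of_isOpen hQopen).2 ⟨?_, ?_⟩
      · exact fun v hv => (hθ₂f β v hv).differentiableAt.differentiableWithinAt
      · exact (hωM β).congr (fun v hv => (hθ₂f β v hv).fderiv)
    have hpd2 : ∀ α β, ∀ v ∈ Q,
        pderiv' α (θ₂f β) v = ((Matrix.of fun j' δ' => B j' δ' v)⁻¹) α β := by
      intro α β v hv
      rw [Stmt12.pderiv'_eq, (hθ₂f β v hv).fderiv, Stmt12.coeffForm_bv]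
    have hDf2 : ∀ v ∈ Q, HasFDerivAt (fun v (β : Fin N) => θ₂f β v)
        (Stmt12.matCLM (Matrix.of fun β α =>
          ((Matrix.of fun j' δ' => B j' δ' v)⁻¹) α β)) v := by
      intro v hv
      apply hasFDerivAt_pi''
      intro β
      have heq : (ContinuousLinearMap.proj (R := ℝ) (φ := fun _ : Fin N => ℝ) β).comp
          (Stmt12.matCLM (Matrix.of fun β' α =>
            ((Matrix.of fun j' δ' => B j' δ' v)⁻¹) α β'))
          = Stmt12.coeffForm (fun α => ((Matrix.of fun j' δ' => B j' δ' v)⁻¹) α β) := by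
        ext h
        simp [Stmt12.matCLM_apply, Stmt12.coeffForm_apply]
      rw [heq]
      exact hθ₂f β v hv
    have hinvf2 : ∀ v ∈ Q, ∃ e : (Fin N → ℝ) ≃L[ℝ] (Fin N → ℝ),
        (e : (Fin N → ℝ) →L[ℝ] (Fin N → ℝ)) = Stmt12.matCLM
          (Matrix.of fun β α => ((Matrix.of fun j' δ' => B j' δ' v)⁻¹) α β) := by
      intro v hv
      apply Stmt12.exists_cle
      apply (Matrix.isUnit_iff_isUnit_det _).2
      have htr : (Matrix.of fun β α => ((Matrix.of fun j' δ' => B j' δ' v)⁻¹) α β)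
          = ((Matrix.of fun j' δ' => B j' δ' v)⁻¹).transpose := rfl
      rw [htr, Matrix.det_transpose]
      exact Matrix.isUnit_nonsing_inv_det _
        ((Matrix.isUnit_iff_isUnit_det _).1 (hBinv v hv))
    obtain ⟨V, hVopen, hVmem, hVsub, hinj, himg, ψ, hψ, hψl⟩ :=
      Stmt12.ift_package (f := fun v (β : Fin N) => θ₂f β v) hQopen
        (contDiffOn_pi.2 hθ₂smooth) hDf2 hinvf2 hq
    refine ⟨V, hVopen, hVmem, hVsub, (fun v (β : Fin N) => θ₂f β v),
      (contDiffOn_pi.2 hθ₂smooth).mono hVsub, hinj, himg, ⟨ψ, hψ, hψl⟩, ?_⟩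
    intro v hv j β
    have hid := Stmt12.BM_id B hBinv v (hVsub hv) j β
    rw [← hid]
    refine Finset.sum_congr rfl fun α _ => ?_
    rw [hpd2 α β v (hVsub hv)]
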